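/- Every prime ideal of A⋈^f J is of exactly one of the following two forms: P'^f := {(p, f(p)+j) : p ∈ P, j ∈ J} for a (unique) prime ideal P of A, or Q̄^f := {(a, f(a)+j) : a ∈ A, j ∈ J, f(a)+j ∈ Q} for a (unique) prime ideal Q of B not containing J. Conversely, P'^f is a prime ideal of A⋈^f J for every prime ideal P of A, and Q̄^f is a prime ideal of A⋈^f J for every prime ideal Q of B with J ⊄ Q. -/

import Mathlib

section Amalgamation

variable {A B : Type*} [CommRing A] [CommRing B]

/-- The amalgamation `A ⋈^f J` of `A` with `B` along the ideal `J` of `B` with respect to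
the ring homomorphism `f : A → B`, realized as the subring
`{(a, f a + j) | a ∈ A, j ∈ J}` of `A × B`. -/
def amalg (f : A →+* B) (J : Ideal B) : Subring (A × B) where
  carrier := {x : A × B | x.2 - f x.1 ∈ J}
  zero_mem' := by simp
  one_mem' := by simp
  add_mem' := by
    intro x y hx hy
    simp only [Set.mem_setOf_eq, Prod.fst_add, Prod.snd_add, map_add] at *
    have h : x.2 + y.2 - (f x.1 + f y.1) = x.2 - f x.1 + (y.2 - f y.1) := by ring
    rw [h]; exact J.add_mem hx hy
  neg_mem' := by
    intro x hx
    simp only [Set.mem_setOf_eq, Prod.fst_neg, Prod.snd_neg, map_neg] at *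
    have h : -x.2 - -f x.1 = -(x.2 - f x.1) := by ring
    rw [h]; exact J.neg_mem hx
  mul_mem' := by
    intro x y hx hy
    simp only [Set.mem_setOf_eq, Prod.fst_mul, Prod.snd_mul, map_mul] at *
    have h : x.2 * y.2 - f x.1 * f y.1 = x.2 * (y.2 - f y.1) + (x.2 - f x.1) * f y.1 := by ring
    rw [h]
    exact J.add_mem (J.mul_mem_left _ hy) (J.mul_mem_right _ hx)

lemma mem_amalg_iff (f : A →+* B) (J : Ideal B) (x : A × B) :
    x ∈ amalg f J ↔ x.2 - f x.1 ∈ J := Iff.rfl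

/-- The natural projection `p_A : A ⋈^f J → A`. -/
def pA (f : A →+* B) (J : Ideal B) : amalg f J →+* A :=
  (RingHom.fst A B).comp (amalg f J).subtype

/-- The natural projection `p_B : A ⋈^f J → B`. -/
def pB (f : A →+* B) (J : Ideal B) : amalg f J →+* B :=
  (RingHom.snd A B).comp (amalg f J).subtype

/-- For an ideal `P` of `A`, the ideal `P'^f = P ⋈^f J = {(p, f p + j) | p ∈ P, j ∈ J}`
of `A ⋈^f J`. -/
def idealPf (f : A →+* B) (J : Ideal B) (P : Ideal A) : Ideal (amalg f J) :=
  Submodule.copy (Ideal.comap (pA f J) P)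
    {x : amalg f J | ∃ p ∈ P, ∃ j ∈ J, (x : A × B) = (p, f p + j)}
    (by
      ext x
      simp only [Set.mem_setOf_eq, SetLike.mem_coe, Ideal.mem_comap]
      constructor
      · rintro ⟨p, hp, j, hj, hx⟩
        have h1 : pA f J x = p := by
          show (x : A × B).1 = p
          rw [hx]
        rw [h1]; exact hp
      · intro hx
        refine ⟨(x : A × B).1, hx, (x : A × B).2 - f (x : A × B).1,
          (mem_amalg_iff f J _).mp x.2, ?_⟩
        ext <;> simp)

/-- For an ideal `Q` of `B`, the ideal `Q̄^f = {(a, f a + j) | a ∈ A, j ∈ J, f a + j ∈ Q}`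
of `A ⋈^f J`. -/
def idealQf (f : A →+* B) (J : Ideal B) (Q : Ideal B) : Ideal (amalg f J) :=
  Submodule.copy (Ideal.comap (pB f J) Q)
    {x : amalg f J | ∃ a : A, ∃ j ∈ J, (x : A × B) = (a, f a + j) ∧ f a + j ∈ Q}
    (by
      ext x
      simp only [Set.mem_setOf_eq, SetLike.mem_coe, Ideal.mem_comap]
      constructor
      · rintro ⟨a, j, hj, hx, hQ⟩
        have h1 : pB f J x = f a + j := by
          show (x : A × B).2 = f a + j
          rw [hx]
        rw [h1]; exact hQ
      · intro hx
        refine ⟨(x : A × B).1, (x : A × B).2 - f (x : A × B).1,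
          (mem_amalg_iff f J _).mp x.2, by ext <;> simp, ?_⟩
        have hx' : (x : A × B).2 ∈ Q := hx
        simpa using hx')

end Amalgamation

namespace AmalgAux

variable {A B : Type*} [CommRing A] [CommRing B] (f : A →+* B) (J : Ideal B)

lemma idealPf_eq (P : Ideal A) : idealPf f J P = Ideal.comap (pA f J) P :=
  Submodule.copy_eq _ _ _

lemma idealQf_eq (Q : Ideal B) : idealQf f J Q = Ideal.comap (pB f J) Q :=
  Submodule.copy_eq _ _ _

/-- The element `(0, j)` of the amalgamation, for `j ∈ J`. -/
def elt {j : B} (hj : j ∈ J) : amalg f J :=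
  ⟨(0, j), by simpa [mem_amalg_iff] using hj⟩

@[simp] lemma pB_elt {j : B} (hj : j ∈ J) : pB f J (elt f J hj) = j := rfl

@[simp] lemma pA_elt {j : B} (hj : j ∈ J) : pA f J (elt f J hj) = 0 := rfl

lemma elt_eq_elt {j j' : B} (hj : j ∈ J) (hj' : j' ∈ J) (h : j = j') :
    elt f J hj = elt f J hj' := Subtype.ext (by simp [elt, h])

lemma elt_mem_congr {H : Ideal (amalg f J)} {j j' : B} (hj : j ∈ J) (hj' : j' ∈ J)
    (h : j = j') : elt f J hj ∈ H ↔ elt f J hj' ∈ H := by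
  rw [elt_eq_elt f J hj hj' h]

lemma elt_mul {j j' : B} (hj : j ∈ J) (hj' : j' ∈ J) :
    elt f J hj * elt f J hj' = elt f J (J.mul_mem_left j hj') :=
  Subtype.ext (by simp [elt, Prod.ext_iff])

lemma elt_mul_x {j : B} (hj : j ∈ J) (x : amalg f J) :
    elt f J hj * x = elt f J (J.mul_mem_right (x : A × B).2 hj) :=
  Subtype.ext (by simp [elt, Prod.ext_iff])

lemma pA_surjective : Function.Surjective (pA f J) := fun a =>
  ⟨⟨(a, f a), by simp [mem_amalg_iff]⟩, rfl⟩

lemma ker_pA_le {H : Ideal (amalg f J)} (h : ∀ j, ∀ hj : j ∈ J, elt f J hj ∈ H) :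
    RingHom.ker (pA f J) ≤ H := by
  intro x hx
  have h1 : (x : A × B).1 = 0 := hx
  have h2 : (x : A × B).2 ∈ J := by
    have hx2 := x.2
    rw [mem_amalg_iff] at hx2
    simpa [h1] using hx2
  have hxe : x = elt f J h2 := Subtype.ext (by simp [elt, Prod.ext_iff, h1])
  rw [hxe]
  exact h _ h2

/-- The prime `Q` of `B` attached to a prime `H` of the amalgamation not containing
`{0} × J`, namely `{b | (0, j₀ * b) ∈ H}` for a fixed `j₀ ∈ J` with `(0, j₀) ∉ H`. -/
def Qof {j₀ : B} (hj₀ : j₀ ∈ J) (H : Ideal (amalg f J)) (hH : H.IsPrime)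
    (hne : elt f J hj₀ ∉ H) : Ideal B where
  carrier := {b : B | elt f J (J.mul_mem_right b hj₀) ∈ H}
  zero_mem' := by
    have h0 : elt f J (J.mul_mem_right 0 hj₀) = 0 := Subtype.ext (by simp [elt])
    simp only [Set.mem_setOf_eq, h0]
    exact H.zero_mem
  add_mem' := by
    intro b c hb hc
    simp only [Set.mem_setOf_eq] at *
    have h1 : elt f J (J.mul_mem_right b hj₀) + elt f J (J.mul_mem_right c hj₀) =
        elt f J (J.mul_mem_right (b + c) hj₀) :=
      Subtype.ext (by simp [elt, Prod.ext_iff, mul_add])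
    rw [← h1]
    exact H.add_mem hb hc
  smul_mem' := by
    intro c b hb
    simp only [Set.mem_setOf_eq, smul_eq_mul] at *
    have h1 : elt f J (J.mul_mem_right c hj₀) * elt f J (J.mul_mem_right b hj₀) ∈ H :=
      H.mul_mem_left _ hb
    rw [elt_mul] at h1
    have h2 : elt f J hj₀ * elt f J (J.mul_mem_right (c * b) hj₀) ∈ H := by
      rw [elt_mul]
      exact (elt_mem_congr f J _ _ (by ring)).mp h1
    exact (hH.mem_or_mem h2).resolve_left hne

lemma mem_Qof {j₀ : B} (hj₀ : j₀ ∈ J) (H : Ideal (amalg f J)) (hH : H.IsPrime)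
    (hne : elt f J hj₀ ∉ H) (b : B) :
    b ∈ Qof f J hj₀ H hH hne ↔ elt f J (J.mul_mem_right b hj₀) ∈ H := Iff.rfl

lemma q_case {H : Ideal (amalg f J)} (hH : H.IsPrime) {j₀ : B} (hj₀ : j₀ ∈ J)
    (hne : elt f J hj₀ ∉ H) :
    ∃ Q : Ideal B, Q.IsPrime ∧ ¬ J ≤ Q ∧ H = Ideal.comap (pB f J) Q := by
  refine ⟨Qof f J hj₀ H hH hne, ⟨?_, ?_⟩, ?_, ?_⟩
  · -- Q ≠ ⊤
    intro htop
    have h1 : (1 : B) ∈ Qof f J hj₀ H hH hne := htop ▸ Submodule.mem_top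
    rw [mem_Qof] at h1
    exact hne ((elt_eq_elt f J _ hj₀ (mul_one j₀)) ▸ h1)
  · -- mem_or_mem
    intro b c hbc
    rw [mem_Qof] at hbc
    have h1 : elt f J hj₀ * elt f J (J.mul_mem_right (b * c) hj₀) ∈ H :=
      H.mul_mem_left _ hbc
    rw [elt_mul] at h1
    have h2 : elt f J (J.mul_mem_right b hj₀) * elt f J (J.mul_mem_right c hj₀) ∈ H := by
      rw [elt_mul]
      exact (elt_mem_congr f J _ _ (by ring)).mp h1
    exact hH.mem_or_mem h2
  · -- ¬ J ≤ Q
    intro hle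
    have h1 : j₀ ∈ Qof f J hj₀ H hH hne := hle hj₀
    rw [mem_Qof] at h1
    have h2 : elt f J hj₀ * elt f J hj₀ ∈ H := by
      rw [elt_mul]; exact h1
    exact hne ((hH.mem_or_mem h2).elim id id)
  · -- H = comap pB Q
    ext x
    rw [Ideal.mem_comap]
    constructor
    · intro hx
      show elt f J (J.mul_mem_right (pB f J x) hj₀) ∈ H
      have h1 : elt f J hj₀ * x ∈ H := H.mul_mem_left _ hx
      rw [elt_mul_x] at h1
      exact (elt_mem_congr f J _ _ rfl).mp h1
    · intro hx
      have hx' : elt f J (J.mul_mem_right (pB f J x) hj₀) ∈ H := hx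
      have h1 : elt f J (J.mul_mem_right (x : A × B).2 hj₀) ∈ H :=
        (elt_mem_congr f J _ _ rfl).mp hx'
      rw [← elt_mul_x f J hj₀] at h1
      exact (hH.mem_or_mem h1).resolve_left hne

lemma q_unique {Q Q' : Ideal B} (hQ : Q.IsPrime) (hQ' : Q'.IsPrime)
    (hJQ : ¬ J ≤ Q)
    (h : Ideal.comap (pB f J) Q = Ideal.comap (pB f J) Q') : Q = Q' := by
  obtain ⟨j₀, hj₀, hj₀Q⟩ := SetLike.not_le_iff_exists.mp hJQ
  have hj₀Q' : j₀ ∉ Q' := by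
    intro hmem
    have : elt f J hj₀ ∈ Ideal.comap (pB f J) Q' := by
      rw [Ideal.mem_comap, pB_elt]; exact hmem
    rw [← h, Ideal.mem_comap, pB_elt] at this
    exact hj₀Q this
  ext b
  have key : ∀ (R : Ideal B), R.IsPrime → j₀ ∉ R → (b ∈ R ↔ j₀ * b ∈ R) := by
    intro R hR hj₀R
    exact ⟨fun hb => R.mul_mem_left _ hb, fun hb => (hR.mem_or_mem hb).resolve_left hj₀R⟩
  rw [key Q hQ hj₀Q, key Q' hQ' hj₀Q']
  have h1 : elt f J (J.mul_mem_right b hj₀) ∈ Ideal.comap (pB f J) Q ↔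
      elt f J (J.mul_mem_right b hj₀) ∈ Ideal.comap (pB f J) Q' := by rw [h]
  simpa [Ideal.mem_comap] using h1

end AmalgAux

/-- Every prime ideal of `A ⋈^f J` has exactly one of the two forms `P'^f` (for a unique
prime `P` of `A`) or `Q̄^f` (for a unique prime `Q` of `B` not containing `J`); conversely,
all ideals of these two forms are prime. -/
theorem stmt4 {A B : Type*} [CommRing A] [CommRing B] (f : A →+* B) (J : Ideal B) :
    (∀ H : Ideal (amalg f J), H.IsPrime →
      ((∃! P : Ideal A, P.IsPrime ∧ H = idealPf f J P) ∧
        ¬ (∃ Q : Ideal B, Q.IsPrime ∧ ¬ J ≤ Q ∧ H = idealQf f J Q)) ∨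
      ((∃! Q : Ideal B, Q.IsPrime ∧ ¬ J ≤ Q ∧ H = idealQf f J Q) ∧
        ¬ (∃ P : Ideal A, P.IsPrime ∧ H = idealPf f J P))) ∧
    (∀ P : Ideal A, P.IsPrime → (idealPf f J P).IsPrime) ∧
    (∀ Q : Ideal B, Q.IsPrime → ¬ J ≤ Q → (idealQf f J Q).IsPrime) := by
  have hsurj := AmalgAux.pA_surjective f J
  refine ⟨?_, ?_, ?_⟩
  · intro H hH
    by_cases hc : ∀ j, ∀ hj : j ∈ J, AmalgAux.elt f J hj ∈ H
    · -- H contains {0} × J : the P-case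
      left
      have hker := AmalgAux.ker_pA_le f J hc
      constructor
      · refine ⟨Ideal.map (pA f J) H, ⟨?_, ?_⟩, ?_⟩
        · exact Ideal.map_isPrime_of_surjective hsurj hker
        · rw [AmalgAux.idealPf_eq, Ideal.comap_map_of_surjective _ hsurj,
            ← RingHom.ker_eq_comap_bot, sup_eq_left.mpr hker]
        · rintro P ⟨hP, rfl⟩
          rw [AmalgAux.idealPf_eq, Ideal.map_comap_of_surjective _ hsurj]
      · rintro ⟨Q, hQ, hJQ, hHQ⟩
        obtain ⟨j, hj, hjQ⟩ := SetLike.not_le_iff_exists.mp hJQ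
        have h1 : AmalgAux.elt f J hj ∈ H := hc j hj
        rw [hHQ, AmalgAux.idealQf_eq, Ideal.mem_comap, AmalgAux.pB_elt] at h1
        exact hjQ h1
    · -- the Q-case
      right
      push_neg at hc
      obtain ⟨j₀, hj₀, hne⟩ := hc
      obtain ⟨Q, hQ, hJQ, hHQ⟩ := AmalgAux.q_case f J hH hj₀ hne
      constructor
      · refine ⟨Q, ⟨hQ, hJQ, by rw [AmalgAux.idealQf_eq]; exact hHQ⟩, ?_⟩
        rintro Q' ⟨hQ', hJQ', hHQ'⟩
        rw [AmalgAux.idealQf_eq] at hHQ'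
        exact (AmalgAux.q_unique f J hQ' hQ hJQ' (hHQ'.symm.trans hHQ)).symm ▸ rfl
      · rintro ⟨P, hP, hHP⟩
        apply hne
        rw [hHP, AmalgAux.idealPf_eq, Ideal.mem_comap, AmalgAux.pA_elt]
        exact P.zero_mem
  · intro P hP
    rw [AmalgAux.idealPf_eq]
    haveI := hP
    exact Ideal.IsPrime.comap _
  · intro Q hQ _
    rw [AmalgAux.idealQf_eq]
    haveI := hQ
    exact Ideal.IsPrime.comap _
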